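/- Let R = K[x,y] with K algebraically closed, and let f, g, h ∈ R be homogeneous with f, g parameters (i.e. (f,g) is (x,y)-primary). Let (a_1,a_2,a_3) and (b_1,b_2,b_3) be a homogeneous basis of the module of relations of (f,g,h), of total degrees e and e'. Then the ideal (a_3, b_3) ⊆ K[x,y] contains (f,g); in particular (a_3,b_3) is (x,y)-primary and a_3, b_3 have no common factor. -/

import Mathlib

open MvPolynomial

lemma primeX (K : Type*) [Field K] (i : Fin 2) : Prime (X i : MvPolynomial (Fin 2) K) := by
  have h0 : Prime (X 0 : MvPolynomial (Fin 2) K) := by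
    rw [← MulEquiv.prime_iff (MvPolynomial.finSuccEquiv K 1).toMulEquiv]
    simpa [MvPolynomial.finSuccEquiv_X_zero] using Polynomial.prime_X
  fin_cases i
  · exact h0
  · rw [← MulEquiv.prime_iff (MvPolynomial.renameEquiv K (Equiv.swap (0:Fin 2) 1)).toMulEquiv]
    simpa [MvPolynomial.renameEquiv_apply, Equiv.swap_apply_right] using h0


/-- Let `R = K[x,y]` (`K` algebraically closed), `f, g, h ∈ R` homogeneous with `f, g`
parameters (`(f,g)` is `(x,y)`-primary), and let `(a₁,a₂,a₃)`, `(b₁,b₂,b₃)` be a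
homogeneous basis of the module of relations of `(f,g,h)`, of total degrees `e` and `e'`.
Then `(f,g) ⊆ (a₃,b₃)`; in particular `(a₃,b₃)` is `(x,y)`-primary and `a₃, b₃` have no
common factor. -/
theorem stmt19 (K : Type*) [Field K] [IsAlgClosed K]
    (f g h a1 a2 a3 b1 b2 b3 : MvPolynomial (Fin 2) K)
    (df dg dh e e' : ℕ)
    (hfh : f.IsHomogeneous df) (hgh : g.IsHomogeneous dg) (hhh : h.IsHomogeneous dh)
    (ha1 : a1.IsHomogeneous (e - df)) (ha2 : a2.IsHomogeneous (e - dg))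
    (ha3 : a3.IsHomogeneous (e - dh))
    (hb1 : b1.IsHomogeneous (e' - df)) (hb2 : b2.IsHomogeneous (e' - dg))
    (hb3 : b3.IsHomogeneous (e' - dh))
    -- `f, g` are parameters: `(f,g)` is `(x,y)`-primary
    (hparam : Ideal.span {(X 0 : MvPolynomial (Fin 2) K), X 1} ≤
      (Ideal.span {f, g}).radical)
    -- `(a₁,a₂,a₃)` and `(b₁,b₂,b₃)` are relations:
    (hrela : f * a1 + g * a2 + h * a3 = 0)
    (hrelb : f * b1 + g * b2 + h * b3 = 0)
    -- they generate all relations: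
    (hgen : ∀ v1 v2 v3 : MvPolynomial (Fin 2) K, f * v1 + g * v2 + h * v3 = 0 →
      ∃ r s : MvPolynomial (Fin 2) K,
        v1 = r * a1 + s * b1 ∧ v2 = r * a2 + s * b2 ∧ v3 = r * a3 + s * b3)
    -- and they are linearly independent over `R`:
    (hindep : ∀ r s : MvPolynomial (Fin 2) K,
      r * a1 + s * b1 = 0 → r * a2 + s * b2 = 0 → r * a3 + s * b3 = 0 → r = 0 ∧ s = 0) :
    Ideal.span {f, g} ≤ Ideal.span {a3, b3} ∧
    Ideal.span {(X 0 : MvPolynomial (Fin 2) K), X 1} ≤ (Ideal.span {a3, b3}).radical ∧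
    IsRelPrime a3 b3 := by
  have hgen' : ∀ v1 v2 v3 : MvPolynomial (Fin 2) K, f * v1 + g * v2 + h * v3 = 0 →
      ∃ r s : MvPolynomial (Fin 2) K, v3 = r * a3 + s * b3 := by
    intro v1 v2 v3 hv
    obtain ⟨r, s, _, _, h3⟩ := hgen v1 v2 v3 hv
    exact ⟨r, s, h3⟩
  have h1 : Ideal.span {f, g} ≤ Ideal.span {a3, b3} := by
    rw [Ideal.span_le]
    have hf : ∃ r s : MvPolynomial (Fin 2) K, f = r * a3 + s * b3 :=
      hgen' (-h) 0 f (by ring)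
    have hg : ∃ r s : MvPolynomial (Fin 2) K, g = r * a3 + s * b3 :=
      hgen' 0 (-h) g (by ring)
    rintro p (rfl | rfl)
    · obtain ⟨r, s, hv⟩ := hf
      exact Ideal.mem_span_pair.2 ⟨r, s, hv.symm⟩
    · obtain ⟨r, s, hv⟩ := hg
      exact Ideal.mem_span_pair.2 ⟨r, s, hv.symm⟩
  have h2 : Ideal.span {(X 0 : MvPolynomial (Fin 2) K), X 1} ≤
      (Ideal.span {a3, b3}).radical := hparam.trans (Ideal.radical_mono h1)
  refine ⟨h1, h2, ?_⟩
  intro d hd1 hd2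
  have hspan : Ideal.span ({a3, b3} : Set (MvPolynomial (Fin 2) K)) ≤ Ideal.span {d} := by
    rw [Ideal.span_le]
    rintro p (rfl | rfl) <;> exact Ideal.mem_span_singleton.2 (by assumption)
  have hx : ∀ i : Fin 2, ∃ n : ℕ, d ∣ (X i : MvPolynomial (Fin 2) K) ^ n := by
    intro i
    have : (X i : MvPolynomial (Fin 2) K) ∈ (Ideal.span {d}).radical := by
      refine (h2.trans (Ideal.radical_mono hspan)) ?_
      fin_cases i
      · exact Ideal.subset_span (Or.inl rfl)
      · exact Ideal.subset_span (Or.inr rfl)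
    obtain ⟨n, hn⟩ := this
    exact ⟨n, Ideal.mem_span_singleton.1 hn⟩
  obtain ⟨n, hn⟩ := hx 0
  obtain ⟨m, hm⟩ := hx 1
  have hrel : IsRelPrime ((X 0 : MvPolynomial (Fin 2) K)) (X 1) := by
    refine ((primeX K 0).irreducible.isRelPrime_iff_not_dvd).2 ?_
    simp [MvPolynomial.X_dvd_X]
  exact (hrel.pow) hn hm
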